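/- The critical cardinalities of S1(Τ,Ω) and S1(Τ,O) are equal: non(S1(Τ,Ω)) = non(S1(Τ,O)). -/

import Mathlib

open Set Filter Cardinal
open scoped Classical

noncomputable section

/-- The Cantor space `2^ℕ`. -/
abbrev Cantor := ℕ → Bool

/-- Arrays: elements of `2^(ℕ×ℕ)`. -/
abbrev Arr := ℕ × ℕ → Bool

/-- A γ-array: every row is eventually 1. -/
def IsGammaArray (A : Arr) : Prop := ∀ n, ∀ᶠ m in atTop, A (n, m) = true

/-- A γ-family: a set of γ-arrays. -/
def GammaFamily (𝒜 : Set Arr) : Prop := ∀ A ∈ 𝒜, IsGammaArray A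

/-- A family of arrays is finitely τ-diagonalizable. -/
def FinTauDiag (𝒜 : Set Arr) : Prop :=
  ∃ F : ℕ → Finset ℕ,
    (∀ A ∈ 𝒜, ∃ᶠ n in atTop, ∃ m ∈ F n, A (n, m) = true) ∧
    (∀ A ∈ 𝒜, ∀ B ∈ 𝒜,
      (∀ᶠ n in atTop, ∀ m ∈ F n, A (n, m) ≤ B (n, m)) ∨
      (∀ᶠ n in atTop, ∀ m ∈ F n, B (n, m) ≤ A (n, m)))

/-- A family of arrays is semi τ-diagonalizable (via a partial function with domain `D`). -/
def SemiTauDiag (𝒜 : Set Arr) : Prop :=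
  ∃ (D : Set ℕ) (g : ℕ → ℕ),
    (∀ A ∈ 𝒜, ∃ᶠ n in atTop, n ∈ D ∧ A (n, g n) = true) ∧
    (∀ A ∈ 𝒜, ∀ B ∈ 𝒜,
      (∀ᶠ n in atTop, n ∈ D → A (n, g n) ≤ B (n, g n)) ∨
      (∀ᶠ n in atTop, n ∈ D → B (n, g n) ≤ A (n, g n)))

/-- A τ-family of arrays. -/
def TauFamily (𝒜 : Set Arr) : Prop :=
  (∀ A ∈ 𝒜, ∀ n, ∃ᶠ m in atTop, A (n, m) = true) ∧
  (∀ A ∈ 𝒜, ∀ B ∈ 𝒜, ∀ n,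
    (∀ᶠ m in atTop, A (n, m) ≤ B (n, m)) ∨
    (∀ᶠ m in atTop, B (n, m) ≤ A (n, m)))

/-- A family of arrays is τ-diagonalizable. -/
def TauDiag (𝒜 : Set Arr) : Prop :=
  ∃ g : ℕ → ℕ,
    (∀ A ∈ 𝒜, ∃ᶠ n in atTop, A (n, g n) = true) ∧
    (∀ A ∈ 𝒜, ∀ B ∈ 𝒜,
      (∀ᶠ n in atTop, A (n, g n) ≤ B (n, g n)) ∨
      (∀ᶠ n in atTop, B (n, g n) ≤ A (n, g n)))

/-- A family of arrays is o-diagonalizable. -/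
def ODiag (𝒜 : Set Arr) : Prop :=
  ∃ g : ℕ → ℕ, ∀ A ∈ 𝒜, ∃ n, A (n, g n) = true

/-- An ω-family of arrays: rows frequently 1 and, for each `n`,
the family of the `n`-th rows is centered. -/
def OmegaFamily (𝒜 : Set Arr) : Prop :=
  (∀ A ∈ 𝒜, ∀ n, ∃ᶠ m in atTop, A (n, m) = true) ∧
  (∀ n, ∀ 𝒜' ⊆ 𝒜, 𝒜'.Finite → {m | ∀ A ∈ 𝒜', A (n, m) = true}.Infinite)

/-- The bounding number 𝔟. -/
def bNum : Cardinal :=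
  sInf {c | ∃ F : Set (ℕ → ℕ), Cardinal.mk F = c ∧
    ¬ ∃ g : ℕ → ℕ, ∀ f ∈ F, ∀ᶠ n in atTop, f n ≤ g n}

/-- The splitting number 𝔰. -/
def sNum : Cardinal :=
  sInf {c | ∃ S : Set (Set ℕ), Cardinal.mk S = c ∧ (∀ s ∈ S, s.Infinite) ∧
    ∀ a : Set ℕ, a.Infinite → ∃ s ∈ S, (a ∩ s).Infinite ∧ (a \ s).Infinite}

/-- The tower number 𝔱. -/
def tNum : Cardinal :=
  sInf {c | ∃ T : Set (Set ℕ), Cardinal.mk T = c ∧ (∀ t ∈ T, t.Infinite) ∧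
    (∀ a ∈ T, ∀ b ∈ T, (a \ b).Finite ∨ (b \ a).Finite) ∧
    ¬ ∃ a : Set ℕ, a.Infinite ∧ ∀ t ∈ T, (a \ t).Finite}

/-- cov(M): the least number of meager sets covering the Baire space. -/
def covM : Cardinal :=
  sInf {c | ∃ 𝒞 : Set (Set (ℕ → ℕ)), Cardinal.mk 𝒞 = c ∧
    (∀ M ∈ 𝒞, IsMeagre M) ∧ ⋃₀ 𝒞 = Set.univ}

/-- The o-diagonalization number: the minimal cardinality of a τ-family
which is not o-diagonalizable. -/
def odNum : Cardinal :=
  sInf {c | ∃ 𝒜 : Set Arr, Cardinal.mk 𝒜 = c ∧ TauFamily 𝒜 ∧ ¬ ODiag 𝒜}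

section Covers

variable (α : Type*)

/-- A countable cover of the space `α`. -/
def CountCover (𝒰 : Set (Set α)) : Prop :=
  𝒰.Countable ∧ ⋃₀ 𝒰 = Set.univ ∧ Set.univ ∉ 𝒰

/-- A (countable) γ-cover. -/
def GammaCover (𝒰 : Set (Set α)) : Prop :=
  CountCover α 𝒰 ∧ 𝒰.Infinite ∧ ∀ x : α, {U | U ∈ 𝒰 ∧ x ∉ U}.Finite

/-- A (countable) τ-cover. -/
def TauCover (𝒰 : Set (Set α)) : Prop :=
  CountCover α 𝒰 ∧ (∀ x : α, {U | U ∈ 𝒰 ∧ x ∈ U}.Infinite) ∧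
  ∀ x y : α, {U | U ∈ 𝒰 ∧ x ∈ U ∧ y ∉ U}.Finite ∨ {U | U ∈ 𝒰 ∧ y ∈ U ∧ x ∉ U}.Finite

/-- A (countable) ω-cover. -/
def OmegaCover (𝒰 : Set (Set α)) : Prop :=
  CountCover α 𝒰 ∧ ∀ F : Set α, F.Finite → ∃ U ∈ 𝒰, F ⊆ U

variable [TopologicalSpace α]

/-- All members are open. -/
def OpenFam (𝒰 : Set (Set α)) : Prop := ∀ U ∈ 𝒰, IsOpen U

/-- All members are clopen. -/
def ClopenFam (𝒰 : Set (Set α)) : Prop := ∀ U ∈ 𝒰, IsClopen U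

/-- The class O of countable open covers. -/
def OCov (𝒰 : Set (Set α)) : Prop := CountCover α 𝒰 ∧ OpenFam α 𝒰
/-- The class Γ of countable open γ-covers. -/
def OGamma (𝒰 : Set (Set α)) : Prop := GammaCover α 𝒰 ∧ OpenFam α 𝒰
/-- The class Τ of countable open τ-covers. -/
def OTau (𝒰 : Set (Set α)) : Prop := TauCover α 𝒰 ∧ OpenFam α 𝒰
/-- The class Ω of countable open ω-covers. -/
def OOmega (𝒰 : Set (Set α)) : Prop := OmegaCover α 𝒰 ∧ OpenFam α 𝒰

/-- The class C of countable clopen covers. -/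
def KCov (𝒰 : Set (Set α)) : Prop := CountCover α 𝒰 ∧ ClopenFam α 𝒰
/-- The class C_Γ of countable clopen γ-covers. -/
def KGamma (𝒰 : Set (Set α)) : Prop := GammaCover α 𝒰 ∧ ClopenFam α 𝒰
/-- The class C_Τ of countable clopen τ-covers. -/
def KTau (𝒰 : Set (Set α)) : Prop := TauCover α 𝒰 ∧ ClopenFam α 𝒰

end Covers

/-- The selection principle S1(𝒜,ℬ). -/
def S1 (α : Type*) (𝒜 ℬ : Set (Set α) → Prop) : Prop :=
  ∀ U : ℕ → Set (Set α), (∀ n, 𝒜 (U n)) →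
    ∃ V : ℕ → Set α, (∀ n, V n ∈ U n) ∧ ℬ (range V)

/-- The selection principle Sfin(𝒜,ℬ). -/
def SFin (α : Type*) (𝒜 ℬ : Set (Set α) → Prop) : Prop :=
  ∀ U : ℕ → Set (Set α), (∀ n, 𝒜 (U n)) →
    ∃ F : ℕ → Set (Set α), (∀ n, (F n).Finite ∧ F n ⊆ U n) ∧ ℬ (⋃ n, F n)

/-- The selection principle Ufin(𝒜,ℬ). -/
def UFin (α : Type*) (𝒜 ℬ : Set (Set α) → Prop) : Prop :=
  ∀ U : ℕ → Set (Set α), (∀ n, 𝒜 (U n)) →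
    (∀ n, ¬ ∃ F : Set (Set α), F ⊆ U n ∧ F.Finite ∧ ⋃₀ F = Set.univ) →
    ∃ F : ℕ → Set (Set α), (∀ n, (F n).Finite ∧ F n ⊆ U n) ∧
      ℬ (range fun n => ⋃₀ F n)

/-- The critical cardinality non(P) of a property `P` of sets of reals:
the minimal cardinality of an infinite subset of the Cantor space not satisfying `P`. -/
def nonP (P : Set Cantor → Prop) : Cardinal :=
  sInf {c | ∃ X : Set Cantor, X.Infinite ∧ ¬ P X ∧ Cardinal.mk X = c}

/-- The collection of cardinalities of witnessing families of `f`-sequences for `θ_f`. -/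
def ThetaSet (f : ℕ → ℕ) : Set Cardinal :=
  {c | ∃ ℱ : Set (ℕ → Set ℕ), Cardinal.mk ℱ = c ∧
    (∀ σ ∈ ℱ, ∀ n, σ n ⊆ Iio (f n)) ∧
    (∀ σ ∈ ℱ, ∀ᶠ n in atTop, (σ n).Nonempty) ∧
    (∀ σ ∈ ℱ, ∀ η ∈ ℱ, (∀ᶠ n in atTop, σ n ⊆ η n) ∨ (∀ᶠ n in atTop, η n ⊆ σ n)) ∧
    ¬ ∃ g : ℕ → ℕ, ∀ σ ∈ ℱ, ∃ n, g n ∈ σ n}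

/-- The cardinal θ_f; equal to 𝔠⁺ if no witnessing family exists. -/
def theta (f : ℕ → ℕ) : Cardinal :=
  if (ThetaSet f).Nonempty then sInf (ThetaSet f) else Order.succ Cardinal.continuum

/-- θ* = min over f (with all values ≥ 2) of θ_f. -/
def thetaStar : Cardinal :=
  sInf {c | ∃ f : ℕ → ℕ, (∀ n, 2 ≤ f n) ∧ theta f = c}

/-- The collection of cardinalities of witnessing families for `𝔈_f`. -/
def ESet (f : ℕ → ℕ) : Set Cardinal :=
  {c | ∃ F : Set (ℕ → ℕ), Cardinal.mk F = c ∧ (∀ h ∈ F, ∀ n, h n < f n) ∧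
    ∀ g : ℕ → ℕ, ∃ h ∈ F, ∀ n, h n ≠ g n}

/-- The cardinal 𝔈_f; equal to 𝔠⁺ if no witnessing family exists. -/
def ENum (f : ℕ → ℕ) : Cardinal :=
  if (ESet f).Nonempty then sInf (ESet f) else Order.succ Cardinal.continuum

/-- 𝔈* = min over f (with all values ≥ 1) of 𝔈_f. -/
def EStar : Cardinal :=
  sInf {c | ∃ f : ℕ → ℕ, (∀ n, 1 ≤ f n) ∧ ENum f = c}



section Stmt12Aux

/-- Interleaving map `(Fin (k+1) → Cantor) → Cantor`. -/
def itl (k : ℕ) (f : Fin (k+1) → Cantor) : Cantor :=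
  fun n => f ⟨n % (k+1), Nat.mod_lt _ (Nat.succ_pos k)⟩ (n / (k+1))

/-- The `i`-th projection for the interleaving. -/
def prj (k i : ℕ) (g : Cantor) : Cantor := fun m => g ((k+1) * m + i)

lemma prj_itl (k : ℕ) (f : Fin (k+1) → Cantor) (i : Fin (k+1)) :
    prj k i.1 (itl k f) = f i := by
  funext m
  have h1 : ((k+1) * m + i.1) % (k+1) = i.1 := by
    rw [Nat.mul_add_mod, Nat.mod_eq_of_lt i.2]
  have h2 : ((k+1) * m + i.1) / (k+1) = m := by
    rw [Nat.mul_add_div (Nat.succ_pos k), Nat.div_eq_of_lt i.2, Nat.add_zero]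
  show f ⟨((k+1) * m + i.1) % (k+1), _⟩ (((k+1) * m + i.1) / (k+1)) = f i m
  simp only [h1, h2, Fin.eta]

/-- The `(k+1)`-st power of `X`, realized as a subset of the Cantor space. -/
def Tset (k : ℕ) (X : Set Cantor) : Set Cantor :=
  {g | ∀ i : Fin (k+1), prj k i.1 g ∈ X}

/-- Components of an element of the power. -/
def cmps (k : ℕ) (X : Set Cantor) (g : ↥(Tset k X)) (i : Fin (k+1)) : ↥X :=
  ⟨prj k i.1 g.1, g.2 i⟩

/-- A tuple of elements of `X` as an element of the power. -/
def tEl (k : ℕ) (X : Set Cantor) (f : Fin (k+1) → ↥X) : ↥(Tset k X) :=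
  ⟨itl k (fun i => (f i).1), fun i => by rw [show prj k i.1 (itl k (fun i => (f i).1)) = (f i).1 from prj_itl k _ i]; exact (f i).2⟩

lemma cmps_tEl {k : ℕ} {X : Set Cantor} (f : Fin (k+1) → ↥X) (i : Fin (k+1)) :
    cmps k X (tEl k X f) i = f i :=
  Subtype.ext (prj_itl k (fun j => (f j).1) i)

/-- The power of a set of the subspace. -/
def hset (k : ℕ) (X : Set Cantor) (U : Set ↥X) : Set ↥(Tset k X) :=
  {g | ∀ i : Fin (k+1), cmps k X g i ∈ U}

lemma hset_open {k : ℕ} {X : Set Cantor} {U : Set ↥X} (hU : IsOpen U) :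
    IsOpen (hset k X U) := by
  obtain ⟨W, hW, rfl⟩ := isOpen_induced_iff.mp hU
  have he : hset k X (Subtype.val ⁻¹' W) =
      ⋂ i : Fin (k+1), (fun g : ↥(Tset k X) => prj k i.1 g.1) ⁻¹' W := by
    ext g
    simp only [hset, mem_setOf_eq, mem_iInter, mem_preimage]
    rfl
  rw [he]
  exact isOpen_iInter_of_finite fun i =>
    hW.preimage ((continuous_pi fun m => continuous_apply _).comp continuous_subtype_val)

lemma hset_inj {k : ℕ} {X : Set Cantor} : Function.Injective (hset k X) := by
  intro U U' h
  ext x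
  constructor <;> intro hx
  · have h1 : tEl k X (fun _ => x) ∈ hset k X U := fun i => by rw [cmps_tEl]; exact hx
    rw [h] at h1
    have := h1 0
    rwa [cmps_tEl] at this
  · have h1 : tEl k X (fun _ => x) ∈ hset k X U' := fun i => by rw [cmps_tEl]; exact hx
    rw [← h] at h1
    have := h1 0
    rwa [cmps_tEl] at this

lemma seq_min {β : Type*} : ∀ (n : ℕ) (s : Fin (n+1) → Set β),
    (∀ i j, (s i \ s j).Finite ∨ (s j \ s i).Finite) →
    ∃ i₀, ∀ i, (s i₀ \ s i).Finite := by
  intro n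
  induction n with
  | zero =>
    intro s _
    refine ⟨0, fun i => ?_⟩
    have hi : i = 0 := Fin.ext (Nat.lt_one_iff.mp i.2)
    rw [hi]
    simp
  | succ n ih =>
    intro s hs
    obtain ⟨i₀, hi₀⟩ := ih (fun i => s i.castSucc) (fun i j => hs _ _)
    rcases hs i₀.castSucc (Fin.last (n+1)) with h | h
    · refine ⟨i₀.castSucc, fun i => ?_⟩
      induction i using Fin.lastCases with
      | last => exact h
      | cast j => exact hi₀ j
    · refine ⟨Fin.last (n+1), fun i => ?_⟩
      induction i using Fin.lastCases with
      | last => simp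
      | cast j =>
        refine (h.union (hi₀ j)).subset ?_
        rintro W ⟨hW1, hW2⟩
        by_cases hc : W ∈ s i₀.castSucc
        · exact Or.inr ⟨hc, hW2⟩
        · exact Or.inl ⟨hW1, hc⟩

lemma hat_tau (k : ℕ) (X : Set Cantor) (𝒰 : Set (Set ↥X)) (h : OTau ↥X 𝒰) :
    OTau ↥(Tset k X) (hset k X '' 𝒰) := by
  obtain ⟨⟨⟨hcnt, hcov, huniv⟩, hpt, hpair⟩, hopen⟩ := h
  set A : ↥X → Set (Set ↥X) := fun x => {U | U ∈ 𝒰 ∧ x ∈ U} with hA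
  set I : (Fin (k+1) → ↥X) → Set (Set ↥X) := fun f => {U | U ∈ 𝒰 ∧ ∀ i, f i ∈ U} with hI
  have hAd : ∀ x y : ↥X, A x \ A y = {U | U ∈ 𝒰 ∧ x ∈ U ∧ y ∉ U} := by
    intro x y
    ext W
    simp only [hA, Set.mem_diff, mem_setOf_eq, not_and]
    tauto
  have hpair' : ∀ x y : ↥X, (A x \ A y).Finite ∨ (A y \ A x).Finite := by
    intro x y
    rw [hAd, hAd]
    exact hpair x y
  have ha : ∀ f : Fin (k+1) → ↥X, ∃ x, (A x \ I f).Finite ∧ I f ⊆ A x ∧ (A x).Infinite := by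
    intro f
    obtain ⟨i₀, hi₀⟩ := seq_min k (fun i => A (f i)) (fun i j => hpair' _ _)
    refine ⟨f i₀, ?_, ?_, hpt _⟩
    · have hsub : A (f i₀) \ I f ⊆ ⋃ i, (A (f i₀) \ A (f i)) := by
        rintro W ⟨hW1, hW2⟩
        simp only [hI, mem_setOf_eq, not_and] at hW2
        obtain ⟨i, hi⟩ := not_forall.mp (hW2 hW1.1)
        exact Set.mem_iUnion.mpr ⟨i, hW1, fun hWi => hi hWi.2⟩
      exact (Set.finite_iUnion hi₀).subset hsub
    · rintro W ⟨hW1, hW2⟩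
      exact ⟨hW1, hW2 i₀⟩
  have hbI : ∀ f, (I f).Infinite := by
    intro f
    obtain ⟨x, h1, h2, h3⟩ := ha f
    refine (h3.diff h1).mono ?_
    rintro W ⟨hW1, hW2⟩
    by_contra hW3
    exact hW2 ⟨hW1, hW3⟩
  have hkey : ∀ (x y : ↥X) (f e : Fin (k+1) → ↥X), (A x \ I f).Finite → I e ⊆ A y →
      (A y \ A x).Finite → (I e \ I f).Finite := by
    intro x y f e h1 h2 h3
    refine (h3.union h1).subset ?_
    rintro W ⟨hW1, hW2⟩
    by_cases hc : W ∈ A x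
    · exact Or.inr ⟨hc, hW2⟩
    · exact Or.inl ⟨h2 hW1, hc⟩
  have hcI : ∀ f e, (I f \ I e).Finite ∨ (I e \ I f).Finite := by
    intro f e
    obtain ⟨x, hx1, hx2, _⟩ := ha f
    obtain ⟨y, hy1, hy2, _⟩ := ha e
    rcases hpair' x y with hp | hp
    · exact Or.inl (hkey y x e f hy1 hx2 hp)
    · exact Or.inr (hkey x y f e hx1 hy2 hp)
  refine ⟨⟨⟨hcnt.image _, ?_, ?_⟩, ?_, ?_⟩, ?_⟩
  · rw [Set.eq_univ_iff_forall]
    intro g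
    obtain ⟨W, hW⟩ := (hbI (cmps k X g)).nonempty
    exact Set.mem_sUnion.mpr ⟨hset k X W, Set.mem_image_of_mem _ hW.1, fun i => hW.2 i⟩
  · rintro ⟨W, hW𝒰, hEq⟩
    have hne : W ≠ Set.univ := fun hw => huniv (hw ▸ hW𝒰)
    obtain ⟨x, hx⟩ := (Set.ne_univ_iff_exists_notMem W).mp hne
    have h1 : tEl k X (fun _ => x) ∈ hset k X W := hEq ▸ Set.mem_univ _
    have := h1 0
    rw [cmps_tEl] at this
    exact hx this
  · intro g
    refine ((hbI (cmps k X g)).image hset_inj.injOn).mono ?_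
    rintro _ ⟨W, ⟨hW1, hW2⟩, rfl⟩
    exact ⟨Set.mem_image_of_mem _ hW1, fun i => hW2 i⟩
  · intro g g'
    have e1 : {V | V ∈ hset k X '' 𝒰 ∧ g ∈ V ∧ g' ∉ V} =
        hset k X '' (I (cmps k X g) \ I (cmps k X g')) := by
      ext V
      constructor
      · rintro ⟨⟨W, hW𝒰, rfl⟩, hg, hh⟩
        exact ⟨W, ⟨⟨hW𝒰, fun i => hg i⟩, fun hWe => hh (fun i => hWe.2 i)⟩, rfl⟩
      · rintro ⟨W, ⟨⟨hW1, hW2⟩, hW3⟩, rfl⟩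
        exact ⟨Set.mem_image_of_mem _ hW1, fun i => hW2 i,
          fun hh => hW3 ⟨hW1, fun i => hh i⟩⟩
    have e2 : {V | V ∈ hset k X '' 𝒰 ∧ g' ∈ V ∧ g ∉ V} =
        hset k X '' (I (cmps k X g') \ I (cmps k X g)) := by
      ext V
      constructor
      · rintro ⟨⟨W, hW𝒰, rfl⟩, hg, hh⟩
        exact ⟨W, ⟨⟨hW𝒰, fun i => hg i⟩, fun hWe => hh (fun i => hWe.2 i)⟩, rfl⟩
      · rintro ⟨W, ⟨⟨hW1, hW2⟩, hW3⟩, rfl⟩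
        exact ⟨Set.mem_image_of_mem _ hW1, fun i => hW2 i,
          fun hh => hW3 ⟨hW1, fun i => hh i⟩⟩
    rcases hcI (cmps k X g) (cmps k X g') with hf | hf
    · exact Or.inl (e1 ▸ hf.image _)
    · exact Or.inr (e2 ▸ hf.image _)
  · rintro V ⟨W, hW, rfl⟩
    exact hset_open (hopen W hW)

lemma tset_mk (k : ℕ) (X : Set Cantor) (hX : X.Infinite) :
    Cardinal.mk ↥(Tset k X) = Cardinal.mk ↥X := by
  haveI : Infinite ↥X := hX.to_subtype
  have e : ↥(Tset k X) ≃ (Fin (k+1) → ↥X) :=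
    { toFun := cmps k X
      invFun := tEl k X
      left_inv := fun g => Subtype.ext (by
        funext n
        show g.1 ((k+1) * (n / (k+1)) + n % (k+1)) = g.1 n
        exact congrArg g.1 (Nat.div_add_mod n (k+1)))
      right_inv := fun f => funext fun i => cmps_tEl f i }
  rw [Cardinal.mk_congr e, ← Cardinal.power_def, Cardinal.mk_fin, Cardinal.power_natCast]
  exact Cardinal.power_nat_eq (Cardinal.aleph0_le_mk _) (Nat.succ_le_succ (Nat.zero_le k))

lemma key_lemma (X : Set Cantor) (hX : X.Infinite)
    (H : ∀ Y : Set Cantor, Y.Infinite → Cardinal.mk ↥Y ≤ Cardinal.mk ↥X →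
      S1 ↥Y (OTau ↥Y) (OCov ↥Y)) :
    S1 ↥X (OTau ↥X) (OOmega ↥X) := by
  intro U hU
  obtain ⟨x0, hx0⟩ := hX.nonempty
  let e2 : ℕ ≃ ℕ × ℕ := (Denumerable.eqv (ℕ × ℕ)).symm
  have hTinf : ∀ a : ℕ, (Tset a X).Infinite := by
    intro a
    rw [← Set.infinite_coe_iff]
    haveI : Infinite ↥X := hX.to_subtype
    exact Infinite.of_injective (fun x : ↥X => tEl a X (fun _ => x))
      (fun x y hxy => by
        have := congrArg (fun g => cmps a X g 0) hxy
        simpa [cmps_tEl] using this)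
  have happ : ∀ a : ℕ, ∃ sel : ℕ → Set ↥(Tset a X),
      (∀ j, sel j ∈ hset a X '' (U (e2.symm (a, j)))) ∧
      OCov ↥(Tset a X) (Set.range sel) :=
    fun a => H (Tset a X) (hTinf a) (tset_mk a X hX).le
      (fun j => hset a X '' (U (e2.symm (a, j)))) (fun j => hat_tau a X _ (hU _))
  choose sel hsel hOC using happ
  have hsel' : ∀ a j, ∃ U', U' ∈ U (e2.symm (a, j)) ∧ hset a X U' = sel a j := by
    intro a j
    obtain ⟨U', h1, h2⟩ := hsel a j
    exact ⟨U', h1, h2⟩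
  choose Uc hUc hUceq using hsel'
  set V : ℕ → Set ↥X := fun n => Uc (e2 n).1 (e2 n).2 with hVdef
  have hVU : ∀ n, V n ∈ U n := by
    intro n
    have h1 := hUc (e2 n).1 (e2 n).2
    rwa [show ((e2 n).1, (e2 n).2) = e2 n from rfl, e2.symm_apply_apply] at h1
  have homega : ∀ F : Set ↥X, F.Finite → ∃ W ∈ Set.range V, F ⊆ W := by
    intro F hF
    classical
    let l := hF.toFinset.toList
    let a := l.length
    let f : Fin (a+1) → ↥X := fun i => if h : i.1 < l.length then l.get ⟨i.1, h⟩ else ⟨x0, hx0⟩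
    have hFf : ∀ x ∈ F, ∃ i, f i = x := by
      intro x hx
      have hxl : x ∈ l := by
        rw [Finset.mem_toList, Set.Finite.mem_toFinset]
        exact hx
      obtain ⟨i, hi⟩ := List.mem_iff_get.mp hxl
      refine ⟨⟨i.1, i.2.trans (Nat.lt_succ_self a)⟩, ?_⟩
      show (if h : i.1 < l.length then l.get ⟨i.1, h⟩ else ⟨x0, hx0⟩) = x
      rw [dif_pos i.2]
      exact hi
    have hcov := (hOC a).1.2.1
    have hmem : tEl a X f ∈ ⋃₀ Set.range (sel a) := hcov ▸ Set.mem_univ _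
    obtain ⟨S, ⟨j, rfl⟩, hgS⟩ := hmem
    rw [← hUceq a j] at hgS
    refine ⟨V (e2.symm (a, j)), Set.mem_range_self _, ?_⟩
    have hVeq : V (e2.symm (a, j)) = Uc a j := by
      simp only [hVdef, e2.apply_symm_apply]
    rw [hVeq]
    intro x hx
    obtain ⟨i, rfl⟩ := hFf x hx
    have := hgS i
    rwa [cmps_tEl] at this
  refine ⟨V, hVU, ⟨⟨Set.countable_range V, ?_, ?_⟩, ?_⟩, ?_⟩
  · rw [Set.eq_univ_iff_forall]
    intro x
    obtain ⟨W, hW, hxW⟩ := homega {x} (Set.finite_singleton x)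
    exact Set.mem_sUnion.mpr ⟨W, hW, hxW rfl⟩
  · rintro ⟨n, hn⟩
    exact (hU n).1.1.2.2 (hn ▸ hVU n)
  · exact homega
  · rintro W ⟨n, rfl⟩
    exact (hU n).2 _ (hVU n)

end Stmt12Aux

/-- non(S1(Τ,Ω)) = non(S1(Τ,O)). -/
theorem stmt12 :
    nonP (fun X => S1 ↥X (OTau ↥X) (OOmega ↥X)) =
      nonP (fun X => S1 ↥X (OTau ↥X) (OCov ↥X)) := by
  have hPQ : ∀ X : Set Cantor, S1 ↥X (OTau ↥X) (OOmega ↥X) → S1 ↥X (OTau ↥X) (OCov ↥X) := by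
    intro X h U hU
    obtain ⟨V, hV1, hV2⟩ := h U hU
    exact ⟨V, hV1, hV2.1.1, hV2.2⟩
  have hPs : nonP (fun X => S1 ↥X (OTau ↥X) (OOmega ↥X)) =
      sInf {c | ∃ X : Set Cantor, X.Infinite ∧ ¬ S1 ↥X (OTau ↥X) (OOmega ↥X) ∧
        Cardinal.mk ↥X = c} := rfl
  have hQs : nonP (fun X => S1 ↥X (OTau ↥X) (OCov ↥X)) =
      sInf {c | ∃ X : Set Cantor, X.Infinite ∧ ¬ S1 ↥X (OTau ↥X) (OCov ↥X) ∧
        Cardinal.mk ↥X = c} := rfl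
  rw [hPs, hQs]
  set Ps := {c | ∃ X : Set Cantor, X.Infinite ∧ ¬ S1 ↥X (OTau ↥X) (OOmega ↥X) ∧
    Cardinal.mk ↥X = c} with hPsd
  set Qs := {c | ∃ X : Set Cantor, X.Infinite ∧ ¬ S1 ↥X (OTau ↥X) (OCov ↥X) ∧
    Cardinal.mk ↥X = c} with hQsd
  have hsub : Qs ⊆ Ps := by
    rintro c ⟨X, h1, h2, rfl⟩
    exact ⟨X, h1, fun hp => h2 (hPQ X hp), rfl⟩
  rcases Set.eq_empty_or_nonempty Ps with he | hne
  · have hq : Qs = ∅ := Set.subset_empty_iff.mp (by rw [he] at hsub; exact hsub)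
    rw [he, hq]
  · obtain ⟨X, hX1, hX2, hX3⟩ := csInf_mem hne
    have hna : ¬ ∀ Y : Set Cantor, Y.Infinite → Cardinal.mk ↥Y ≤ Cardinal.mk ↥X →
        S1 ↥Y (OTau ↥Y) (OCov ↥Y) := fun h => hX2 (key_lemma X hX1 h)
    push_neg at hna
    obtain ⟨Y, hY1, hY2, hY3⟩ := hna
    have hYQ : Cardinal.mk ↥Y ∈ Qs := ⟨Y, hY1, hY3, rfl⟩
    refine le_antisymm (csInf_le_csInf (OrderBot.bddBelow _) ⟨_, hYQ⟩ hsub) ?_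
    calc sInf Qs ≤ Cardinal.mk ↥Y := csInf_le (OrderBot.bddBelow _) hYQ
      _ ≤ Cardinal.mk ↥X := hY2
      _ = sInf Ps := hX3

end
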